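/- arXiv:1303.5797 — 3 statements merged into one kernel-verified Lean document; each statement's English description precedes it below -/
import Mathlib

section
/- For $\Upsilon_1\in\mathbb{R}$ and $k$ a positive even integer, the $k$-th Fourier coefficient of $jj(\zeta)=\cos\zeta\cdot\exp(-ik\Upsilon_1\sin 2\zeta)$ vanishes: $\frac{1}{2\pi}\int_0^{2\pi}\cos\zeta\,e^{-ik\Upsilon_1\sin 2\zeta}\,e^{-ik\zeta}d\zeta=0$. For $k=2n+1$ odd, this coefficient equals $\frac{1}{2}(-1)^n[J_n((2n+1)\Upsilon_1)-J_{n+1}((2n+1)\Upsilon_1)]$. -/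
open Real intervalIntegral


/-- Bessel function of the first kind of integer order, via its integral
representation. -/
noncomputable def besselJ (n : ℤ) (x : ℝ) : ℝ :=
  (1 / (2 * Real.pi)) * ∫ τ in (-Real.pi)..Real.pi, Real.cos (n * τ - x * Real.sin τ)

noncomputable def gg (p : ℤ) (x : ℝ) (θ : ℝ) : ℂ :=
  Complex.exp (-Complex.I * ((x * Real.sin θ : ℝ) : ℂ)) *
    Complex.exp (-Complex.I * (p : ℂ) * (θ : ℝ))

lemma gg_cont (p : ℤ) (x : ℝ) : Continuous (gg p x) := by
  unfold gg; fun_prop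

lemma gg_eq (p : ℤ) (x : ℝ) (θ : ℝ) :
    gg p x θ = ((Real.cos (p * θ + x * Real.sin θ) : ℝ) : ℂ) +
      ((-(Real.sin (p * θ + x * Real.sin θ)) : ℝ) : ℂ) * Complex.I := by
  unfold gg
  rw [← Complex.exp_add]
  have : -Complex.I * ((x * Real.sin θ : ℝ) : ℂ) + -Complex.I * (p : ℂ) * (θ : ℝ)
      = ((-(p * θ + x * Real.sin θ) : ℝ) : ℂ) * Complex.I := by
    push_cast; ring
  rw [this, Complex.exp_mul_I]
  push_cast
  rw [Complex.cos_neg, Complex.sin_neg]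


lemma sin_int_zero (p : ℤ) (x : ℝ) :
    ∫ θ in (-Real.pi)..Real.pi, Real.sin (p * θ + x * Real.sin θ) = 0 := by
  set h : ℝ → ℝ := fun θ => Real.sin (p * θ + x * Real.sin θ) with hh
  have hc : Continuous h := by fun_prop
  have hodd : ∀ θ, h (-θ) = - h θ := by
    intro θ
    simp only [hh]
    rw [Real.sin_neg, mul_neg, mul_neg, ← neg_add, Real.sin_neg]
  have h1 : (∫ θ in (-Real.pi)..(0:ℝ), h θ) = - ∫ θ in (0:ℝ)..Real.pi, h θ := by
    have := intervalIntegral.integral_comp_neg (a := (0:ℝ)) (b := Real.pi) h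
    rw [neg_zero] at this
    rw [← this]
    simp_rw [hodd]
    simp
  rw [← intervalIntegral.integral_add_adjacent_intervals
    (hc.intervalIntegrable (-Real.pi) 0) (hc.intervalIntegrable 0 Real.pi), h1]
  ring

lemma int_gg_pi (p : ℤ) (x : ℝ) :
    (∫ θ in (-Real.pi)..Real.pi, gg p x θ)
      = ((2 * Real.pi * besselJ p (-x) : ℝ) : ℂ) := by
  have hcc : Continuous fun θ => ((Real.cos (p * θ + x * Real.sin θ) : ℝ) : ℂ) := by fun_prop
  have hsc : Continuous fun θ => (((-(Real.sin (p * θ + x * Real.sin θ)) : ℝ) : ℂ) * Complex.I) := by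
    fun_prop
  simp_rw [gg_eq]
  rw [intervalIntegral.integral_add
      (hcc.intervalIntegrable _ _)
      (hsc.intervalIntegrable _ _)]
  have h2 : (∫ θ in (-Real.pi)..Real.pi,
      ((-(Real.sin (p * θ + x * Real.sin θ)) : ℝ) : ℂ) * Complex.I) = 0 := by
    have : ∀ θ : ℝ, ((-(Real.sin (p * θ + x * Real.sin θ)) : ℝ) : ℂ) * Complex.I
        = (-(Real.sin (p * θ + x * Real.sin θ))) • Complex.I := by
      intro θ; rw [Complex.real_smul]
    simp_rw [this]
    rw [intervalIntegral.integral_smul_const]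
    simp [sin_int_zero p x]
  rw [h2, add_zero, intervalIntegral.integral_ofReal]
  norm_cast
  rw [besselJ]
  have hπ : (2 * Real.pi) ≠ 0 := by positivity
  rw [show (2 * Real.pi) * ((1 / (2 * Real.pi)) *
      ∫ τ in (-Real.pi)..Real.pi, Real.cos (p * τ - (-x) * Real.sin τ))
    = ∫ τ in (-Real.pi)..Real.pi, Real.cos (p * τ - (-x) * Real.sin τ) by
      field_simp]
  congr 1 with τ
  ring_nf

lemma gg_periodic (p : ℤ) (x : ℝ) : Function.Periodic (gg p x) (2 * Real.pi) := by
  intro θ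
  unfold gg
  rw [Real.sin_add_two_pi]
  congr 1
  rw [show (-Complex.I * (p:ℂ) * ((θ + 2*Real.pi : ℝ) : ℂ))
      = -Complex.I * (p:ℂ) * (θ:ℝ) + (-p : ℤ) * (2 * Real.pi * Complex.I) by push_cast; ring,
    Complex.exp_add, Complex.exp_int_mul_two_pi_mul_I, mul_one]

lemma int_gg_twopi (p : ℤ) (x : ℝ) :
    (∫ θ in (0:ℝ)..(2*Real.pi), gg p x θ)
      = ((2 * Real.pi * besselJ p (-x) : ℝ) : ℂ) := by
  rw [← int_gg_pi p x]
  have := (gg_periodic p x).intervalIntegral_add_eq 0 (-Real.pi)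
  rw [zero_add, show -Real.pi + 2*Real.pi = Real.pi by ring] at this
  exact this

lemma A_even (p : ℤ) (x : ℝ) :
    (∫ ζ in (0:ℝ)..(2*Real.pi),
        Complex.exp (-Complex.I * ((x * Real.sin (2*ζ) : ℝ) : ℂ)) *
          Complex.exp (-Complex.I * ((2*p : ℤ) : ℂ) * (ζ:ℝ)))
      = ((2 * Real.pi * besselJ p (-x) : ℝ) : ℂ) := by
  have key : ∀ ζ : ℝ, Complex.exp (-Complex.I * ((x * Real.sin (2*ζ) : ℝ) : ℂ)) *
      Complex.exp (-Complex.I * ((2*p : ℤ) : ℂ) * (ζ:ℝ)) = gg p x (2 * ζ) := by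
    intro ζ
    unfold gg
    congr 2
    push_cast; ring
  simp_rw [key]
  rw [intervalIntegral.integral_comp_mul_left (gg p x) (by norm_num : (2:ℝ) ≠ 0)]
  rw [mul_zero]
  have h4 : (∫ θ in (0:ℝ)..(2 * (2*Real.pi)), gg p x θ)
      = (2:ℤ) • ∫ θ in (0:ℝ)..(2*Real.pi), gg p x θ := by
    have := (gg_periodic p x).intervalIntegral_add_zsmul_eq 2 0
      (fun a b => (gg_cont p x).intervalIntegrable a b)
    rw [zero_add, zero_add, show ((2:ℤ) • (2*Real.pi) : ℝ) = 2 * (2*Real.pi) by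
      rw [zsmul_eq_mul]; push_cast; ring] at this
    exact this
  rw [h4, int_gg_twopi p x, zsmul_eq_mul, Complex.real_smul]
  push_cast
  ring

lemma A_odd (m : ℤ) (hm : Odd m) (x : ℝ) :
    (∫ ζ in (0:ℝ)..(2*Real.pi),
        Complex.exp (-Complex.I * ((x * Real.sin (2*ζ) : ℝ) : ℂ)) *
          Complex.exp (-Complex.I * (m : ℂ) * (ζ:ℝ)))
      = 0 := by
  set f : ℝ → ℂ := fun ζ => Complex.exp (-Complex.I * ((x * Real.sin (2*ζ) : ℝ) : ℂ)) *
      Complex.exp (-Complex.I * (m : ℂ) * (ζ:ℝ)) with hf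
  have hc : Continuous f := by simp only [hf]; fun_prop
  have hstep : ∀ ζ : ℝ, f (ζ + Real.pi) = - f ζ := by
    intro ζ
    simp only [hf]
    rw [show (2 * (ζ + Real.pi)) = 2*ζ + 2*Real.pi by ring, Real.sin_add_two_pi]
    have h2 : -Complex.I * (m:ℂ) * ((ζ + Real.pi : ℝ) : ℂ)
        = -Complex.I * (m:ℂ) * (ζ:ℝ) + (-m : ℤ) * (Real.pi * Complex.I) := by
      push_cast; ring
    rw [h2, Complex.exp_add, Complex.exp_int_mul, Complex.exp_pi_mul_I]
    rw [(hm.neg).neg_one_zpow]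
    ring
  have h1 : (∫ ζ in Real.pi..(2*Real.pi), f ζ) = - ∫ ζ in (0:ℝ)..Real.pi, f ζ := by
    have := intervalIntegral.integral_comp_add_right (a := (0:ℝ)) (b := Real.pi) f Real.pi
    rw [zero_add, show Real.pi + Real.pi = 2*Real.pi by ring] at this
    rw [← this]
    simp_rw [hstep]
    simp
  rw [← intervalIntegral.integral_add_adjacent_intervals
    (hc.intervalIntegrable 0 Real.pi) (hc.intervalIntegrable Real.pi (2*Real.pi)), h1]
  ring

lemma besselJ_neg (p : ℤ) (x : ℝ) : besselJ p (-x) = (-1)^p * besselJ p x := by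
  unfold besselJ
  set F : ℝ → ℝ := fun τ => Real.cos (p * τ - (-x) * Real.sin τ) with hF
  set h : ℝ → ℝ := fun τ => Real.cos (p * τ - x * Real.sin τ) with hh
  have hFper : Function.Periodic F (2 * Real.pi) := by
    intro τ
    simp only [hF]
    rw [Real.sin_add_two_pi, show (p : ℝ) * (τ + 2*Real.pi) - (-x) * Real.sin τ
      = ((p:ℝ) * τ - (-x) * Real.sin τ) + (p : ℤ) * (2*Real.pi) by push_cast; ring,
      Real.cos_add_int_mul_two_pi]
  have hhper : Function.Periodic h (2 * Real.pi) := by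
    intro τ
    simp only [hh]
    rw [Real.sin_add_two_pi, show (p : ℝ) * (τ + 2*Real.pi) - x * Real.sin τ
      = ((p:ℝ) * τ - x * Real.sin τ) + (p : ℤ) * (2*Real.pi) by push_cast; ring,
      Real.cos_add_int_mul_two_pi]
  have hshift : ∀ s : ℝ, F (s - Real.pi) = (-1)^p * h s := by
    intro s
    simp only [hF, hh]
    rw [show Real.sin (s - Real.pi) = -Real.sin s by
        rw [Real.sin_sub, Real.sin_pi, Real.cos_pi]; ring]
    rw [show (p:ℝ) * (s - Real.pi) - (-x) * (-Real.sin s)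
      = -(((p:ℤ):ℝ) * Real.pi - ((p:ℝ) * s - x * Real.sin s)) by push_cast; ring,
      Real.cos_neg, Real.cos_int_mul_pi_sub]
  have key : (∫ τ in (-Real.pi)..Real.pi, F τ) = (-1)^p * ∫ τ in (-Real.pi)..Real.pi, h τ := by
    have e1 : (∫ τ in (-Real.pi)..Real.pi, F τ) = ∫ τ in (0:ℝ)..(2*Real.pi), F τ := by
      have := hFper.intervalIntegral_add_eq (-Real.pi) 0
      rw [zero_add, show -Real.pi + 2*Real.pi = Real.pi by ring] at this
      exact this
    have e2 : (∫ s in (0:ℝ)..(2*Real.pi), F (s - Real.pi)) = ∫ τ in (-Real.pi)..Real.pi, F τ := by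
      have := intervalIntegral.integral_comp_sub_right (a := (0:ℝ)) (b := 2*Real.pi) F Real.pi
      rw [zero_sub, show 2*Real.pi - Real.pi = Real.pi by ring] at this
      exact this
    have e3 : (∫ s in (0:ℝ)..(2*Real.pi), F (s - Real.pi))
        = (-1)^p * ∫ s in (0:ℝ)..(2*Real.pi), h s := by
      simp_rw [hshift]
      rw [intervalIntegral.integral_const_mul]
    have e4 : (∫ s in (0:ℝ)..(2*Real.pi), h s) = ∫ τ in (-Real.pi)..Real.pi, h τ := by
      have := hhper.intervalIntegral_add_eq 0 (-Real.pi)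
      rw [zero_add, show -Real.pi + 2*Real.pi = Real.pi by ring] at this
      exact this
    rw [← e2, e3, e4]
  rw [key]
  ring

lemma split_main (x : ℝ) (k : ℤ) :
    (∫ ζ in (0:ℝ)..(2 * Real.pi),
        ((Real.cos ζ : ℝ) : ℂ) *
          Complex.exp (-Complex.I * ((x * Real.sin (2 * ζ) : ℝ) : ℂ)) *
          Complex.exp (-Complex.I * (k : ℂ) * (ζ : ℝ)))
      = (1/2 : ℂ) * ((∫ ζ in (0:ℝ)..(2 * Real.pi),
            Complex.exp (-Complex.I * ((x * Real.sin (2 * ζ) : ℝ) : ℂ)) *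
              Complex.exp (-Complex.I * ((k - 1 : ℤ) : ℂ) * (ζ : ℝ)))
        + (∫ ζ in (0:ℝ)..(2 * Real.pi),
            Complex.exp (-Complex.I * ((x * Real.sin (2 * ζ) : ℝ) : ℂ)) *
              Complex.exp (-Complex.I * ((k + 1 : ℤ) : ℂ) * (ζ : ℝ)))) := by
  have hptwise : ∀ ζ : ℝ,
      ((Real.cos ζ : ℝ) : ℂ) *
          Complex.exp (-Complex.I * ((x * Real.sin (2 * ζ) : ℝ) : ℂ)) *
          Complex.exp (-Complex.I * (k : ℂ) * (ζ : ℝ))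
        = (1/2 : ℂ) * (Complex.exp (-Complex.I * ((x * Real.sin (2 * ζ) : ℝ) : ℂ)) *
              Complex.exp (-Complex.I * ((k - 1 : ℤ) : ℂ) * (ζ : ℝ))
          + Complex.exp (-Complex.I * ((x * Real.sin (2 * ζ) : ℝ) : ℂ)) *
              Complex.exp (-Complex.I * ((k + 1 : ℤ) : ℂ) * (ζ : ℝ))) := by
    intro ζ
    have hcos : ((Real.cos ζ : ℝ) : ℂ)
        = (Complex.exp ((ζ:ℂ) * Complex.I) + Complex.exp (-(ζ:ℂ) * Complex.I)) / 2 := by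
      rw [Complex.ofReal_cos, Complex.exp_mul_I, Complex.exp_mul_I, Complex.cos_neg,
        Complex.sin_neg]
      ring
    rw [hcos]
    have e1 : Complex.exp ((ζ:ℂ) * Complex.I) * Complex.exp (-Complex.I * (k : ℂ) * (ζ : ℝ))
        = Complex.exp (-Complex.I * ((k - 1 : ℤ) : ℂ) * (ζ : ℝ)) := by
      rw [← Complex.exp_add]; congr 1; push_cast; ring
    have e2 : Complex.exp (-(ζ:ℂ) * Complex.I) * Complex.exp (-Complex.I * (k : ℂ) * (ζ : ℝ))
        = Complex.exp (-Complex.I * ((k + 1 : ℤ) : ℂ) * (ζ : ℝ)) := by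
      rw [← Complex.exp_add]; congr 1; push_cast; ring
    rw [← e1, ← e2]
    ring
  simp_rw [hptwise]
  rw [intervalIntegral.integral_const_mul]
  congr 1
  rw [intervalIntegral.integral_add]
  · exact (by fun_prop : Continuous fun ζ : ℝ =>
      Complex.exp (-Complex.I * ((x * Real.sin (2 * ζ) : ℝ) : ℂ)) *
        Complex.exp (-Complex.I * ((k - 1 : ℤ) : ℂ) * (ζ : ℝ))).intervalIntegrable _ _
  · exact (by fun_prop : Continuous fun ζ : ℝ =>
      Complex.exp (-Complex.I * ((x * Real.sin (2 * ζ) : ℝ) : ℂ)) *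
        Complex.exp (-Complex.I * ((k + 1 : ℤ) : ℂ) * (ζ : ℝ))).intervalIntegrable _ _

/-- The k-th Fourier coefficient of `cos ζ · exp(-ik Υ₁ sin 2ζ)` vanishes for
even k and equals the standard FEL coupling factor for odd k = 2n+1. -/
theorem stmt_5 (Υ₁ : ℝ) (k : ℕ) (hk : 0 < k) :
    (Even k → (1 / (2 * Real.pi) : ℂ) * (∫ ζ in (0:ℝ)..(2 * Real.pi),
        ((Real.cos ζ : ℝ) : ℂ) *
          Complex.exp (-Complex.I * ((k * Υ₁ * Real.sin (2 * ζ) : ℝ) : ℂ)) *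
          Complex.exp (-Complex.I * (k : ℂ) * (ζ : ℂ))) = 0) ∧
    (∀ n : ℕ, k = 2 * n + 1 →
      (1 / (2 * Real.pi) : ℂ) * (∫ ζ in (0:ℝ)..(2 * Real.pi),
        ((Real.cos ζ : ℝ) : ℂ) *
          Complex.exp (-Complex.I * ((k * Υ₁ * Real.sin (2 * ζ) : ℝ) : ℂ)) *
          Complex.exp (-Complex.I * (k : ℂ) * (ζ : ℂ)))
        = ((1/2 * (-1)^n *
            (besselJ n ((2 * n + 1) * Υ₁) - besselJ (n + 1) ((2 * n + 1) * Υ₁)) : ℝ) : ℂ)) := by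
  set x : ℝ := (k : ℝ) * Υ₁ with hx
  have hsplit := split_main x (k : ℤ)
  have hcast : ((k : ℤ) : ℂ) = (k : ℂ) := by push_cast; ring
  rw [hcast] at hsplit
  constructor
  · intro hkeven
    rw [hsplit, A_odd ((k:ℤ) - 1) (by
        obtain ⟨m, hm⟩ := hkeven
        exact ⟨(m : ℤ) - 1, by push_cast [hm]; ring⟩) x,
      A_odd ((k:ℤ) + 1) (by
        obtain ⟨m, hm⟩ := hkeven
        exact ⟨(m : ℤ), by push_cast [hm]; ring⟩) x]
    ring
  · intro n hn
    have h1 : ((k:ℤ) - 1) = 2 * (n : ℤ) := by omega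
    have h2 : ((k:ℤ) + 1) = 2 * ((n : ℤ) + 1) := by omega
    rw [hsplit, h1, h2, A_even (n : ℤ) x, A_even ((n : ℤ) + 1) x]
    rw [besselJ_neg, besselJ_neg]
    have hxx : x = (2 * (n:ℝ) + 1) * Υ₁ := by rw [hx, hn]; push_cast; ring
    rw [show (1/(2*(Real.pi:ℂ))) = ((1/(2*Real.pi) : ℝ) : ℂ) by push_cast; ring,
      show (1/2 : ℂ) = ((1/2:ℝ):ℂ) by norm_num,
      ← Complex.ofReal_add, ← Complex.ofReal_mul, ← Complex.ofReal_mul,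
      Complex.ofReal_inj, hxx]
    have hπ : Real.pi ≠ 0 := Real.pi_ne_zero
    rw [zpow_natCast, show ((-1:ℝ)^((n:ℤ)+1)) = -(-1:ℝ)^n by
      rw [show ((n:ℤ)+1) = ((n+1:ℕ):ℤ) by push_cast; ring, zpow_natCast, pow_succ]; ring]
    push_cast
    field_simp
    ring
end

section
/- Let $v:[0,\infty)\to\mathbb{R}$ be $C^1$ with $|v(s)|\le M$ and $|v'(s)|\le \eps L$ for all $s$, for constants $M,L\ge 0$ and $\eps>0$. Let $k$ be a nonzero integer and $a\in\mathbb{R}$. Then for $0\le\zeta\le T/\eps$: $\Big|\int_0^\zeta e^{i[v(s)-\eps a s]}e^{iks}\,ds\Big|\le\frac{1}{|k|}\big(2+T(|a|+L)\big)$. -/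
open MeasureTheory intervalIntegral

/-- Integration-by-parts estimate for an oscillatory integral with a slowly
varying phase perturbation; key estimate for the near-to-resonant Besjes
term. -/
theorem stmt_12 (v v' : ℝ → ℝ) (M L ε T : ℝ) (hM : 0 ≤ M) (hL : 0 ≤ L) (hε : 0 < ε)
    (hd : ∀ s, HasDerivAt v (v' s) s)
    (hvM : ∀ s, |v s| ≤ M) (hvL : ∀ s, |v' s| ≤ ε * L)
    (k : ℤ) (hk : k ≠ 0) (a : ℝ) :
    ∀ ζ : ℝ, 0 ≤ ζ → ζ ≤ T / ε →
      ‖∫ s in (0:ℝ)..ζ,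
        Complex.exp (Complex.I * ((v s - ε * a * s : ℝ) : ℂ)) *
          Complex.exp (Complex.I * (k : ℂ) * (s : ℂ))‖
      ≤ (1 / |(k : ℝ)|) * (2 + T * (|a| + L)) := by
  intro ζ hζ0 hζT
  have hkR : (k : ℝ) ≠ 0 := Int.cast_ne_zero.mpr hk
  have hkabs : (0:ℝ) < |(k:ℝ)| := abs_pos.mpr hkR
  set c : ℂ := Complex.I * (k : ℂ) with hc_def
  have hc : c ≠ 0 := mul_ne_zero Complex.I_ne_zero (by exact_mod_cast hk)
  have habsc : ‖c‖ = |(k:ℝ)| := by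
    rw [hc_def, norm_mul, Complex.norm_I, one_mul]
    exact_mod_cast Complex.norm_intCast k
  set F : ℝ → ℂ := fun s => Complex.exp (Complex.I * ((v s - ε * a * s : ℝ) : ℂ)) with hF_def
  set F' : ℝ → ℂ := fun s => Complex.I * ((v' s - ε * a : ℝ) : ℂ) * F s with hF'_def
  set G : ℝ → ℂ := fun s => Complex.exp (c * s) / c with hG_def
  set g : ℝ → ℂ := fun s => Complex.exp (Complex.I * (k:ℂ) * s) with hg_def
  -- derivative facts
  have hG : ∀ s : ℝ, HasDerivAt G (g s) s := by
    intro s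
    have h1 : HasDerivAt (fun s : ℝ => c * (s:ℂ)) c s := by
      simpa using (Complex.ofRealCLM.hasDerivAt (x := s)).const_mul c
    have h2 := (h1.cexp).div_const c
    have heq : Complex.exp (c * s) * c / c = g s := by
      rw [mul_div_assoc, div_self hc, mul_one]
      try simp [hg_def, hc_def, mul_assoc]
    simpa [hG_def, heq] using h2
  have hF : ∀ s : ℝ, HasDerivAt F (F' s) s := by
    intro s
    have h0 : HasDerivAt (fun s : ℝ => v s - ε * a * s) (v' s - ε * a) s :=
      (hd s).sub (by simpa using (hasDerivAt_id s).const_mul (ε * a))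
    have h1 : HasDerivAt (fun s : ℝ => ((v s - ε * a * s : ℝ) : ℂ)) ((v' s - ε * a : ℝ) : ℂ) s :=
      h0.ofReal_comp
    have h2 := (h1.const_mul Complex.I).cexp
    simpa [hF_def, hF'_def, mul_comm, mul_left_comm, mul_assoc] using h2
  -- norms
  have hFnorm : ∀ s : ℝ, ‖F s‖ = 1 := by
    intro s
    rw [hF_def]
    simp [Complex.norm_exp]
  have hGnorm : ∀ s : ℝ, ‖G s‖ = 1 / |(k:ℝ)| := by
    intro s
    rw [hG_def]
    simp only [norm_div, habsc]
    congr 1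
    rw [hc_def]
    simp [Complex.norm_exp, mul_assoc]
  have hF'norm : ∀ s : ℝ, ‖F' s‖ ≤ ε * (|a| + L) := by
    intro s
    rw [hF'_def]
    simp only [norm_mul, Complex.norm_I, one_mul, hFnorm, mul_one, Complex.norm_real, Real.norm_eq_abs]
    calc |v' s - ε * a| ≤ |v' s| + |ε * a| := abs_sub _ _
      _ ≤ ε * L + ε * |a| := by
          gcongr
          · exact hvL s
          · rw [abs_mul, abs_of_pos hε]
      _ = ε * (|a| + L) := by ring
  -- integrability of F'
  have hv'meas : Measurable v' := by
    have : v' = deriv v := funext fun s => ((hd s).deriv).symm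
    rw [this]; exact measurable_deriv v
  have hFcont : Continuous F := by
    have hvc : Continuous v := continuous_iff_continuousAt.mpr fun s => (hd s).continuousAt
    fun_prop
  have hF'int : IntervalIntegrable F' volume 0 ζ := by
    rw [intervalIntegrable_iff]
    apply Integrable.mono' (g := fun _ => ε * (|a| + L)) (integrableOn_const
      (measure_Ioc_lt_top.ne))
    · apply AEStronglyMeasurable.mul _ hFcont.aestronglyMeasurable.restrict
      apply AEStronglyMeasurable.mul aestronglyMeasurable_const
      exact (Complex.measurable_ofReal.comp ((hv'meas.sub measurable_const))).aestronglyMeasurable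
    · exact Filter.Eventually.of_forall fun s => hF'norm s
  have hgint : IntervalIntegrable g volume 0 ζ := by
    apply Continuous.intervalIntegrable
    fun_prop
  -- integration by parts
  have hIBP : (∫ s in (0:ℝ)..ζ, F s * g s)
      = F ζ * G ζ - F 0 * G 0 - ∫ s in (0:ℝ)..ζ, F' s * G s := by
    exact integral_mul_deriv_eq_deriv_mul (fun x _ => hF x) (fun x _ => hG x) hF'int
      (hgint)
  have hεζ : ε * ζ ≤ T := by
    calc ε * ζ ≤ ε * (T / ε) := by gcongr
      _ = T := by field_simp
  have hint2 : ‖∫ s in (0:ℝ)..ζ, F' s * G s‖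
      ≤ ε * (|a| + L) * (1 / |(k:ℝ)|) * ζ := by
    have := intervalIntegral.norm_integral_le_of_norm_le_const
      (C := ε * (|a| + L) * (1 / |(k:ℝ)|)) (f := fun s => F' s * G s)
      (a := (0:ℝ)) (b := ζ) ?_
    · simpa [abs_of_nonneg hζ0] using this
    · intro x hx
      rw [norm_mul, hGnorm]
      gcongr
      exact hF'norm x
  calc ‖∫ s in (0:ℝ)..ζ, F s * g s‖
      ≤ ‖F ζ * G ζ‖ + ‖F 0 * G 0‖
        + ‖∫ s in (0:ℝ)..ζ, F' s * G s‖ := by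
        rw [hIBP]
        calc ‖F ζ * G ζ - F 0 * G 0 - ∫ s in (0:ℝ)..ζ, F' s * G s‖
            ≤ ‖F ζ * G ζ - F 0 * G 0‖
              + ‖∫ s in (0:ℝ)..ζ, F' s * G s‖ := by
              simpa using
                norm_sub_le (F ζ * G ζ - F 0 * G 0) (∫ s in (0:ℝ)..ζ, F' s * G s)
          _ ≤ _ := by
              gcongr <;>
                simpa using norm_sub_le (F ζ * G ζ) (F 0 * G 0)
    _ ≤ 1 / |(k:ℝ)| + 1 / |(k:ℝ)| + ε * (|a| + L) * (1 / |(k:ℝ)|) * ζ := by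
        gcongr ?_ + ?_ + ?_ <;>
          first
            | exact hint2
            | rw [norm_mul, hFnorm, hGnorm, one_mul]
    _ ≤ (1 / |(k:ℝ)|) * (2 + T * (|a| + L)) := by
        have h1 : ε * (|a| + L) * (1 / |(k:ℝ)|) * ζ = (1/|(k:ℝ)|) * ((ε*ζ) * (|a|+L)) := by ring
        rw [h1]
        have h2 : (ε*ζ) * (|a|+L) ≤ T * (|a|+L) := by
          apply mul_le_mul_of_nonneg_right hεζ (by positivity)
        calc 1 / |(k:ℝ)| + 1 / |(k:ℝ)| + (1/|(k:ℝ)|) * ((ε*ζ) * (|a|+L))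
            = (1/|(k:ℝ)|) * (2 + (ε*ζ)*(|a|+L)) := by ring
          _ ≤ (1/|(k:ℝ)|) * (2 + T*(|a|+L)) := by gcongr
end

section
/- Let $(x_1,x_2)$ solve $x_1'=x_2$, $x_2'=-\epsilon\sin x_1$ with $x_1(0)=\xi$, $x_2(0)=1$, where $0<\epsilon$. Then for all $s\in[0,T]$: $|x_1(s)-(s+\xi)|\le 2\sqrt{\epsilon}\sinh(\sqrt{\epsilon}T)$ and $|x_2(s)-1|\le 2\epsilon\cosh(\sqrt{\epsilon}T)$. -/
/-- `sin` is 1-Lipschitz. -/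
lemma sin_sub_sin_abs_le (a b : ℝ) : |Real.sin a - Real.sin b| ≤ |a - b| := by
  rw [Real.sin_sub_sin, abs_mul, abs_mul, abs_two]
  have h1 : |Real.sin ((a - b) / 2)| ≤ |(a - b) / 2| := Real.abs_sin_le_abs
  have h2 : |Real.cos ((a + b) / 2)| ≤ 1 := Real.abs_cos_le_one _
  have h3 : |(a - b) / 2| = |a - b| / 2 := by rw [abs_div]; norm_num
  nlinarith [abs_nonneg (Real.sin ((a - b) / 2)), abs_nonneg ((a-b)/2),
    abs_nonneg (Real.cos ((a + b) / 2))]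

/-- Rigorous error bound for the zeroth-order regular perturbation
approximation of the weakly nonlinear pendulum in the rotation regime. -/
theorem stmt_19 (ε T ξ : ℝ) (hε : 0 < ε) (hT : 0 ≤ T)
    (x₁ x₂ : ℝ → ℝ)
    (h₁ : ∀ s, HasDerivAt x₁ (x₂ s) s)
    (h₂ : ∀ s, HasDerivAt x₂ (-ε * Real.sin (x₁ s)) s)
    (h10 : x₁ 0 = ξ) (h20 : x₂ 0 = 1) :
    ∀ s ∈ Set.Icc (0:ℝ) T,
      |x₁ s - (s + ξ)| ≤ 2 * Real.sqrt ε * Real.sinh (Real.sqrt ε * T) ∧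
      |x₂ s - 1| ≤ 2 * ε * Real.cosh (Real.sqrt ε * T) := by
  set σ : ℝ := Real.sqrt ε with hσdef
  have hσpos : 0 < σ := Real.sqrt_pos.2 hε
  have hσ2 : σ * σ = ε := Real.mul_self_sqrt hε.le
  have hσne : σ ≠ 0 := ne_of_gt hσpos
  clear_value σ
  set e₁ : ℝ → ℝ := fun t => x₁ t - (t + ξ) with he₁def
  set y : ℝ → ℝ := fun t => x₂ t - 1 + ε * (Real.cos ξ - Real.cos (t + ξ)) with hydef
  -- derivatives
  have he₁ : ∀ t, HasDerivAt e₁ (x₂ t - 1) t := by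
    intro t
    exact (h₁ t).sub ((hasDerivAt_id t).add_const ξ)
  have hy : ∀ t, HasDerivAt y (ε * (Real.sin (t + ξ) - Real.sin (x₁ t))) t := by
    intro t
    have hc : HasDerivAt (fun u : ℝ => Real.cos (u + ξ)) (-Real.sin (t + ξ)) t := by
      have := (Real.hasDerivAt_cos (t + ξ)).comp t ((hasDerivAt_id t).add_const ξ); rw [mul_one] at this; exact this
    have := ((h₂ t).sub_const 1).add
      (((hasDerivAt_const t (Real.cos ξ)).sub hc).const_mul ε)
    refine this.congr_deriv ?_
    ring
  have he₁0 : e₁ 0 = 0 := by simp [he₁def, h10]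
  have hy0 : y 0 = 0 := by simp [hydef, h20]
  have hrel : ∀ t : ℝ, x₂ t - 1 = y t - ε * (Real.cos ξ - Real.cos (t + ξ)) := by
    intro t; simp only [hydef]; ring
  have habs₁ : ∀ t : ℝ, |t + ξ - x₁ t| = |e₁ t| := by
    intro t; simp only [he₁def]; rw [abs_sub_comm]
  clear_value e₁ y
  have hcos2 : ∀ t : ℝ, |Real.cos ξ - Real.cos (t + ξ)| ≤ 2 := by
    intro t
    rw [abs_sub_le_iff]
    constructor <;>
      nlinarith [Real.cos_le_one ξ, Real.neg_one_le_cos ξ, Real.cos_le_one (t + ξ),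
        Real.neg_one_le_cos (t + ξ)]
  have hx₂bound : ∀ t : ℝ, ∀ C : ℝ, |y t| ≤ C → |x₂ t - 1| ≤ C + 2 * ε := by
    intro t C hC
    rw [hrel t]
    calc |y t - ε * (Real.cos ξ - Real.cos (t + ξ))|
        ≤ |y t| + |ε * (Real.cos ξ - Real.cos (t + ξ))| := abs_sub _ _
      _ ≤ C + 2 * ε := by
          rw [abs_mul, abs_of_pos hε]
          have := hcos2 t
          nlinarith
  -- the key coupled estimate, with a δ of room
  have key : ∀ δ : ℝ, 0 < δ → ∀ t ∈ Set.Icc (0:ℝ) T,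
      |e₁ t| ≤ (2 * ε + δ) / σ * Real.sinh (σ * t) + δ * Real.cosh (σ * t) ∧
      |y t| ≤ (2 * ε + δ) * (Real.cosh (σ * t) - 1) + δ * σ * Real.sinh (σ * t) + δ / 2 := by
    intro δ hδ
    set A : ℝ → ℝ := fun t => (2 * ε + δ) / σ * Real.sinh (σ * t) + δ * Real.cosh (σ * t)
      with hAdef
    set B : ℝ → ℝ := fun t => (2 * ε + δ) * (Real.cosh (σ * t) - 1) + δ * σ * Real.sinh (σ * t)
      + δ / 2 with hBdef
    have hA' : ∀ u, HasDerivAt A ((2 * ε + δ) * Real.cosh (σ * u) + δ * σ * Real.sinh (σ * u)) u := by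
      intro u
      have hs : HasDerivAt (fun u : ℝ => Real.sinh (σ * u)) (σ * Real.cosh (σ * u)) u := by
        simpa [Function.comp_def, mul_comm] using
          (Real.hasDerivAt_sinh (σ * u)).comp u ((hasDerivAt_id u).const_mul σ)
      have hc : HasDerivAt (fun u : ℝ => Real.cosh (σ * u)) (σ * Real.sinh (σ * u)) u := by
        simpa [Function.comp_def, mul_comm] using
          (Real.hasDerivAt_cosh (σ * u)).comp u ((hasDerivAt_id u).const_mul σ)
      have := (hs.const_mul ((2 * ε + δ) / σ)).add (hc.const_mul δ)
      refine this.congr_deriv ?_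
      field_simp
    have hB' : ∀ u, HasDerivAt B (ε * A u) u := by
      intro u
      have hs : HasDerivAt (fun u : ℝ => Real.sinh (σ * u)) (σ * Real.cosh (σ * u)) u := by
        simpa [Function.comp_def, mul_comm] using
          (Real.hasDerivAt_sinh (σ * u)).comp u ((hasDerivAt_id u).const_mul σ)
      have hc : HasDerivAt (fun u : ℝ => Real.cosh (σ * u)) (σ * Real.sinh (σ * u)) u := by
        simpa [Function.comp_def, mul_comm] using
          (Real.hasDerivAt_cosh (σ * u)).comp u ((hasDerivAt_id u).const_mul σ)
      have := (((hc.sub_const 1).const_mul (2 * ε + δ)).add (hs.const_mul (δ * σ))).add_const (δ / 2)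
      refine this.congr_deriv ?_
      simp only [hAdef]
      rw [← hσ2]
      field_simp
    have hA0 : A 0 = δ := by simp [hAdef]
    have hB0 : B 0 = δ / 2 := by simp [hBdef]
    -- A' = B + 2ε + δ/2
    have hAB : ∀ u : ℝ, (2 * ε + δ) * Real.cosh (σ * u) + δ * σ * Real.sinh (σ * u)
        = B u + 2 * ε + δ / 2 := by
      intro u
      simp only [hBdef]
      ring
    clear_value A B
    suffices hsuff : ∀ t ∈ Set.Icc (0:ℝ) T, |e₁ t| ≤ A t ∧ |y t| ≤ B t by
      intro t ht
      obtain ⟨u1, u2⟩ := hsuff t ht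
      simp only [hAdef] at u1
      simp only [hBdef] at u2
      exact ⟨u1, u2⟩
    by_contra hbad
    push_neg at hbad
    set Bad : Set ℝ := {t : ℝ | t ∈ Set.Icc (0:ℝ) T ∧ (A t < |e₁ t| ∨ B t < |y t|)} with hBadDef
    have hne : Bad.Nonempty := by
      obtain ⟨t₀, ht₀, hP⟩ := hbad
      refine ⟨t₀, ht₀, ?_⟩
      by_contra hq
      push_neg at hq
      exact absurd (hP hq.1) (not_lt.2 hq.2)
    have hbdd : BddBelow Bad := ⟨0, fun t ht => ht.1.1⟩
    obtain ⟨m, hm⟩ : ∃ m : ℝ, m = sInf Bad := ⟨_, rfl⟩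
    have hm0 : 0 ≤ m := by rw [hm]; exact le_csInf hne fun t ht => ht.1.1
    have hmT : m ≤ T := by
      obtain ⟨t, ht⟩ := hne
      rw [hm]
      exact (csInf_le hbdd ht).trans ht.1.2
    have hless : ∀ t, 0 ≤ t → t < m → |e₁ t| ≤ A t ∧ |y t| ≤ B t := by
      intro t ht0 htm
      by_contra hP
      have htBad : t ∈ Bad := by
        refine ⟨⟨ht0, htm.le.trans hmT⟩, ?_⟩
        by_contra hq
        push_neg at hq
        exact hP ⟨hq.1, hq.2⟩
      have := csInf_le hbdd htBad
      rw [← hm] at this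
      exact absurd this (not_le.2 htm)
    -- generic monotonicity helper on [0, m]
    have mono : ∀ (f g : ℝ → ℝ), (∀ u, HasDerivAt f (g u) u) →
        (∀ u, 0 < u → u < m → 0 ≤ g u) → f 0 ≤ f m := by
      intro f g hf hg
      have hmono := monotoneOn_of_deriv_nonneg (convex_Icc (0:ℝ) m)
        (fun u _ => (hf u).continuousAt.continuousWithinAt)
        (fun u _ => (hf u).differentiableAt.differentiableWithinAt)
        (fun u hu => by
          rw [interior_Icc] at hu
          rw [(hf u).deriv]
          exact hg u hu.1 hu.2)
      exact hmono (Set.left_mem_Icc.2 hm0) (Set.right_mem_Icc.2 hm0) hm0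
    -- bounds on derivatives on (0, m)
    have hbound : ∀ u, 0 < u → u < m →
        |x₂ u - 1| ≤ B u + 2 * ε ∧ |ε * (Real.sin (u + ξ) - Real.sin (x₁ u))| ≤ ε * A u := by
      intro u hu0 hum
      obtain ⟨hA1, hB1⟩ := hless u hu0.le hum
      refine ⟨hx₂bound u (B u) hB1, ?_⟩
      rw [abs_mul, abs_of_pos hε]
      have h1 : |Real.sin (u + ξ) - Real.sin (x₁ u)| ≤ |u + ξ - x₁ u| :=
        sin_sub_sin_abs_le _ _
      rw [habs₁ u] at h1
      exact mul_le_mul_of_nonneg_left (h1.trans hA1) hε.le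
    -- four monotone functions
    have key1 : |e₁ m| ≤ A m - δ := by
      have hup : A 0 - e₁ 0 ≤ A m - e₁ m := by
        apply mono (fun u => A u - e₁ u)
          (fun u => ((2 * ε + δ) * Real.cosh (σ * u) + δ * σ * Real.sinh (σ * u)) - (x₂ u - 1))
          (fun u => (hA' u).sub (he₁ u))
        intro u hu0 hum
        have h := (hbound u hu0 hum).1
        rw [abs_le] at h
        rw [hAB u]
        linarith [h.2]
      have hdn : A 0 + e₁ 0 ≤ A m + e₁ m := by
        apply mono (fun u => A u + e₁ u)
          (fun u => ((2 * ε + δ) * Real.cosh (σ * u) + δ * σ * Real.sinh (σ * u)) + (x₂ u - 1))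
          (fun u => (hA' u).add (he₁ u))
        intro u hu0 hum
        have h := (hbound u hu0 hum).1
        rw [abs_le] at h
        rw [hAB u]
        linarith [h.1]
      rw [he₁0, hA0] at hup hdn
      rw [abs_le]
      constructor <;> linarith
    have key2 : |y m| ≤ B m - δ / 2 := by
      have hup : B 0 - y 0 ≤ B m - y m := by
        apply mono (fun u => B u - y u)
          (fun u => ε * A u - ε * (Real.sin (u + ξ) - Real.sin (x₁ u)))
          (fun u => (hB' u).sub (hy u))
        intro u hu0 hum
        have h := (hbound u hu0 hum).2
        rw [abs_le] at h
        linarith [h.2]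
      have hdn : B 0 + y 0 ≤ B m + y m := by
        apply mono (fun u => B u + y u)
          (fun u => ε * A u + ε * (Real.sin (u + ξ) - Real.sin (x₁ u)))
          (fun u => (hB' u).add (hy u))
        intro u hu0 hum
        have h := (hbound u hu0 hum).2
        rw [abs_le] at h
        linarith [h.1]
      rw [hy0, hB0] at hup hdn
      rw [abs_le]
      constructor <;> linarith
    -- continuity gives a neighborhood of m where both strict bounds hold
    set F : ℝ → ℝ := fun t => min (A t - |e₁ t|) (B t - |y t|) with hFdef
    have hFcont : ContinuousAt F m := by
      have hAc : ContinuousAt A m := (hA' m).continuousAt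
      have hBc : ContinuousAt B m := (hB' m).continuousAt
      have he₁c : ContinuousAt e₁ m := (he₁ m).continuousAt
      have hyc : ContinuousAt y m := (hy m).continuousAt
      exact (hAc.sub he₁c.abs).min (hBc.sub hyc.abs)
    have hFm : 0 < F m := by
      simp only [hFdef, lt_min_iff]
      constructor
      · linarith [key1]
      · linarith [key2]
    have hmem : F ⁻¹' Set.Ioi 0 ∈ nhds m := hFcont (Ioi_mem_nhds hFm)
    obtain ⟨η, hη, hball⟩ := Metric.mem_nhds_iff.1 hmem
    have hlt : sInf Bad < m + η := by rw [← hm]; linarith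
    obtain ⟨b, hbBad, hb⟩ := exists_lt_of_csInf_lt hne hlt
    have hmb : m ≤ b := by rw [hm]; exact csInf_le hbdd hbBad
    have hbball : b ∈ Metric.ball m η := by
      rw [Metric.mem_ball, Real.dist_eq, abs_of_nonneg (by linarith)]
      linarith
    have hFb : 0 < F b := hball hbball
    simp only [hFdef, lt_min_iff] at hFb
    rcases hbBad.2 with h | h
    · linarith [hFb.1]
    · linarith [hFb.2]
  -- conclude by letting δ → 0
  intro s hs
  have hs0 : 0 ≤ σ * s := mul_nonneg hσpos.le hs.1
  have hσT : σ * s ≤ σ * T := mul_le_mul_of_nonneg_left hs.2 hσpos.le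
  have hsinhmono : Real.sinh (σ * s) ≤ Real.sinh (σ * T) := Real.sinh_le_sinh.2 hσT
  have hcoshmono : Real.cosh (σ * s) ≤ Real.cosh (σ * T) := by
    rw [Real.cosh_le_cosh, abs_of_nonneg hs0, abs_of_nonneg (hs0.trans hσT)]
    exact hσT
  have hsinh0 : 0 ≤ Real.sinh (σ * s) := Real.sinh_nonneg_iff.2 hs0
  have hcosh1 : 1 ≤ Real.cosh (σ * s) := Real.one_le_cosh _
  constructor
  · refine le_of_forall_pos_le_add fun η hη => ?_
    obtain ⟨K, hK⟩ : ∃ K : ℝ, K = Real.sinh (σ * s) / σ + Real.cosh (σ * s) := ⟨_, rfl⟩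
    have hKpos : 0 < K := by
      have : 0 ≤ Real.sinh (σ * s) / σ := div_nonneg hsinh0 hσpos.le
      rw [hK]; linarith
    have hKne : K ≠ 0 := ne_of_gt hKpos
    have h := (key (η / K) (div_pos hη hKpos) s hs).1
    have e1 : (2 * ε + η / K) / σ * Real.sinh (σ * s)
        = 2 * σ * Real.sinh (σ * s) + η / K * (Real.sinh (σ * s) / σ) := by
      rw [← hσ2]; field_simp
    have e2 : η / K * (Real.sinh (σ * s) / σ) + η / K * Real.cosh (σ * s) = η / K * K := by
      rw [hK]; ring
    have e3 : η / K * K = η := div_mul_cancel₀ η hKne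
    have e4 : 2 * σ * Real.sinh (σ * s) ≤ 2 * σ * Real.sinh (σ * T) :=
      mul_le_mul_of_nonneg_left hsinhmono (by positivity)
    calc |x₁ s - (s + ξ)| = |e₁ s| := by rw [he₁def]
      _ ≤ (2 * ε + η / K) / σ * Real.sinh (σ * s) + η / K * Real.cosh (σ * s) := h
      _ ≤ 2 * σ * Real.sinh (σ * T) + η := by linarith
  · refine le_of_forall_pos_le_add fun η hη => ?_
    obtain ⟨K, hK⟩ : ∃ K : ℝ,
        K = Real.cosh (σ * s) - 1 + σ * Real.sinh (σ * s) + 1 := ⟨_, rfl⟩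
    have hKpos : 0 < K := by
      have : 0 ≤ σ * Real.sinh (σ * s) := mul_nonneg hσpos.le hsinh0
      rw [hK]; linarith
    have hKne : K ≠ 0 := ne_of_gt hKpos
    have h := (key (η / K) (div_pos hη hKpos) s hs).2
    have habs := hx₂bound s _ h
    have hd : 0 < η / K := div_pos hη hKpos
    have e2 : η / K * (Real.cosh (σ * s) - 1) + η / K * σ * Real.sinh (σ * s) + η / K / 2
        ≤ η / K * K := by
      rw [hK] at hd ⊢
      set d := η / (Real.cosh (σ * s) - 1 + σ * Real.sinh (σ * s) + 1) with hd2
      clear_value d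
      linarith [hd]
    have e3 : η / K * K = η := div_mul_cancel₀ η hKne
    have e4 : 2 * ε * Real.cosh (σ * s) ≤ 2 * ε * Real.cosh (σ * T) :=
      mul_le_mul_of_nonneg_left hcoshmono (by positivity)
    have e5 : (2 * ε + η / K) * (Real.cosh (σ * s) - 1) + η / K * σ * Real.sinh (σ * s)
        + η / K / 2 + 2 * ε
        = 2 * ε * Real.cosh (σ * s)
          + (η / K * (Real.cosh (σ * s) - 1) + η / K * σ * Real.sinh (σ * s) + η / K / 2) := by
      ring
    calc |x₂ s - 1| ≤ (2 * ε + η / K) * (Real.cosh (σ * s) - 1)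
          + η / K * σ * Real.sinh (σ * s) + η / K / 2 + 2 * ε := habs
      _ ≤ 2 * ε * Real.cosh (σ * T) + η := by linarith
end
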